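/- Let 𝔉 be a Fraïssé class, let k be an integral domain, let μ be a measure for 𝔉 valued in k, and let 𝔉' be the subclass of 𝔉 consisting of those X ∈ 𝔉 with μ(X) ≠ 0. Then: (1) 𝔉' is a Fraïssé class; (2) the restriction of μ to embeddings between members of 𝔉' is a measure for 𝔉' (with amalgamations taken in 𝔉') all of whose values are nonzero; and (3) if k is a field, this restriction is a regular measure for 𝔉'. -/

import Mathlib

/-! # Relational structures, embeddings, amalgamations, Fraïssé classes -/

namespace Paper

/-- A relational signature: a set `I` of relation symbols with arities `≥ 1`. -/
structure Signature : Type 1 where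
  I : Type
  arity : I → ℕ
  arity_pos : ∀ i, 1 ≤ arity i

variable {σ : Signature}

/-- A (finite relational) structure for the signature `σ`. -/
structure Struc (σ : Signature) : Type 1 where
  carrier : Type
  [fin : Finite carrier]
  rel : ∀ i : σ.I, (Fin (σ.arity i) → carrier) → Prop

attribute [instance] Struc.fin

/-- An embedding of structures: an injection under which the relations on the source are
exactly the restrictions of the relations on the target. -/
structure Emb (X Y : Struc σ) : Type where
  toFun : X.carrier → Y.carrier
  inj : Function.Injective toFun
  rel_iff : ∀ (i : σ.I) (v : Fin (σ.arity i) → X.carrier),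
    Y.rel i (fun j => toFun (v j)) ↔ X.rel i v

/-- The identity embedding. -/
def Emb.id (X : Struc σ) : Emb X X where
  toFun := fun x => x
  inj := fun _ _ h => h
  rel_iff := fun _ _ => Iff.rfl

/-- Composition of embeddings. -/
def Emb.comp {X Y Z : Struc σ} (g : Emb Y Z) (f : Emb X Y) : Emb X Z where
  toFun := fun x => g.toFun (f.toFun x)
  inj := fun _ _ h => f.inj (g.inj h)
  rel_iff := fun i v => (g.rel_iff i fun j => f.toFun (v j)).trans (f.rel_iff i v)

/-- An embedding is an isomorphism if it is surjective. -/
def Emb.IsIso {X Y : Struc σ} (f : Emb X Y) : Prop := Function.Surjective f.toFun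

/-- Two structures are isomorphic. -/
def StrucIso (X Y : Struc σ) : Prop := ∃ f : Emb X Y, f.IsIso

theorem strucIso_refl (X : Struc σ) : StrucIso X X := ⟨Emb.id X, fun y => ⟨y, rfl⟩⟩

/-- The induced structure on a subset of the carrier. -/
def Struc.restrict (X : Struc σ) (S : Set X.carrier) : Struc σ where
  carrier := S
  rel := fun i v => X.rel i (fun j => (v j : X.carrier))

/-- The inclusion embedding of an induced substructure into the whole structure. -/
def Struc.subEmb (X : Struc σ) (S : Set X.carrier) : Emb (X.restrict S) X where
  toFun := fun a => a.1
  inj := fun _ _ h => Subtype.ext h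
  rel_iff := fun _ _ => Iff.rfl

/-- The inclusion embedding between induced substructures on nested subsets. -/
def Struc.inclEmb (X : Struc σ) {S T : Set X.carrier} (h : S ⊆ T) :
    Emb (X.restrict S) (X.restrict T) where
  toFun := fun a => ⟨a.1, h a.2⟩
  inj := fun a b hab => Subtype.ext (Subtype.mk_eq_mk.mp (by exact hab))
  rel_iff := fun _ _ => Iff.rfl

/-- An amalgamation of `Y₁` and `Y₂` over `X` (along `i₁`, `i₂`). -/
structure Amalg {X Y₁ Y₂ : Struc σ} (i₁ : Emb X Y₁) (i₂ : Emb X Y₂) : Type 1 where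
  Z : Struc σ
  j₁ : Emb Y₁ Z
  j₂ : Emb Y₂ Z
  comm : ∀ x, j₁.toFun (i₁.toFun x) = j₂.toFun (i₂.toFun x)
  surj : ∀ z, z ∈ Set.range j₁.toFun ∪ Set.range j₂.toFun

/-- Isomorphism of amalgamations: a structure isomorphism commuting with the two
embeddings. -/
def Amalg.Iso {X Y₁ Y₂ : Struc σ} {i₁ : Emb X Y₁} {i₂ : Emb X Y₂}
    (A B : Amalg i₁ i₂) : Prop :=
  ∃ f : Emb A.Z B.Z, f.IsIso ∧ (∀ y, f.toFun (A.j₁.toFun y) = B.j₁.toFun y) ∧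
    (∀ y, f.toFun (A.j₂.toFun y) = B.j₂.toFun y)

/-- A structure lies in the class `F` up to isomorphism. -/
def MemUpIso (F : Set (Struc σ)) (X : Struc σ) : Prop := ∃ W ∈ F, StrucIso X W

theorem memUpIso_of_mem {F : Set (Struc σ)} {X : Struc σ} (h : X ∈ F) : MemUpIso F X :=
  ⟨X, h, strucIso_refl X⟩

/-- A Fraïssé class. -/
structure IsFraisse (F : Set (Struc σ)) : Prop where
  nonempty : F.Nonempty
  finClasses : ∀ n : ℕ, ∃ (m : ℕ) (r : Fin m → Struc σ),
    ∀ X ∈ F, Nat.card X.carrier = n → ∃ α, StrucIso X (r α)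
  hereditary : ∀ X ∈ F, ∀ Y : Struc σ, Nonempty (Emb Y X) → MemUpIso F Y
  amalg : ∀ (X Y₁ Y₂ : Struc σ), X ∈ F → Y₁ ∈ F → Y₂ ∈ F →
    ∀ (i₁ : Emb X Y₁) (i₂ : Emb X Y₂), ∃ A : Amalg i₁ i₂, MemUpIso F A.Z

theorem pair_compl_subset_left {α : Type*} (a b : α) : ({a, b} : Set α)ᶜ ⊆ ({a} : Set α)ᶜ :=
  Set.compl_subset_compl.mpr (fun _ hx => Set.mem_insert_iff.mpr (Or.inl hx))

theorem pair_compl_subset_right {α : Type*} (a b : α) : ({a, b} : Set α)ᶜ ⊆ ({b} : Set α)ᶜ :=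
  Set.compl_subset_compl.mpr (fun _ hx => Set.mem_insert_iff.mpr (Or.inr hx))

/-- The canonical amalgamation of `X∖{a}` and `X∖{b}` over `X∖{a,b}`, namely `X` itself. -/
def canonAmalg (X : Struc σ) (a b : X.carrier) (hab : a ≠ b) :
    Amalg (X.inclEmb (pair_compl_subset_left a b)) (X.inclEmb (pair_compl_subset_right a b)) where
  Z := X
  j₁ := X.subEmb ({a} : Set X.carrier)ᶜ
  j₂ := X.subEmb ({b} : Set X.carrier)ᶜ
  comm := fun _ => rfl
  surj := fun z => by
    by_cases hz : z = a
    · exact Or.inr ⟨⟨z, by simp only [Set.mem_compl_iff, Set.mem_singleton_iff, hz]; exact hab⟩, rfl⟩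
    · exact Or.inl ⟨⟨z, by simp [hz]⟩, rfl⟩

/-- Two distinct elements `a b` of `X` are separated (relative to the class `F`) if `X` is,
up to isomorphism of amalgamations, the unique amalgamation of `X∖{a}` and `X∖{b}` over
`X∖{a,b}` lying in `F`. -/
def Separated (F : Set (Struc σ)) (X : Struc σ) (a b : X.carrier) (hab : a ≠ b) : Prop :=
  ∀ A : Amalg (X.inclEmb (pair_compl_subset_left a b)) (X.inclEmb (pair_compl_subset_right a b)),
    MemUpIso F A.Z → A.Iso (canonAmalg X a b hab)

/-- Stably separated: every embedding into a member of `F` sends `a`, `b` to separated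
elements. -/
def StablySeparated (F : Set (Struc σ)) (X : Struc σ) (a b : X.carrier) (hab : a ≠ b) : Prop :=
  ∀ X' : Struc σ, MemUpIso F X' → ∀ f : Emb X X',
    Separated F X' (f.toFun a) (f.toFun b) (fun h => hab (f.inj h))

/-- Isomorphism of marked structures. -/
def MarkedIso (X : Struc σ) (a : X.carrier) (Y : Struc σ) (b : Y.carrier) : Prop :=
  ∃ f : Emb X Y, f.IsIso ∧ f.toFun a = b

/-- `b` is extraneous in the marked structure `(X, a)` if it is separated from `a`. -/
def Extraneous (F : Set (Struc σ)) (X : Struc σ) (a b : X.carrier) : Prop :=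
  ∃ h : a ≠ b, Separated F X a b h

/-- A marked structure is minimal if it has no extraneous elements. -/
def MinimalMarked (F : Set (Struc σ)) (X : Struc σ) (a : X.carrier) : Prop :=
  ∀ b : X.carrier, ¬ Extraneous F X a b

/-- `f : W → X` is a one-point extension missing exactly `a`. -/
def IsOnePointExt {W X : Struc σ} (f : Emb W X) (a : X.carrier) : Prop :=
  Set.range f.toFun = ({a} : Set X.carrier)ᶜ

end Paper

/-! # Measures on Fraïssé classes and the induced regular measure -/

namespace Paper

variable {σ : Signature}

/-- `μ` is a measure for the class `F` valued in the commutative ring `k`: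
(a) isomorphisms get value `1`; (b) multiplicativity under composition; (c) the
amalgamation identity `μ(i) = Σ_α μ(i'_α)`, where `i'_α` runs over a complete irredundant
system of representatives of the isomorphism classes of amalgamations lying in `F`. -/
def IsMeasure (F : Set (Struc σ)) {k : Type} [CommRing k]
    (μ : ∀ X Y : Struc σ, Emb X Y → k) : Prop :=
  (∀ (X Y : Struc σ), X ∈ F → Y ∈ F → ∀ f : Emb X Y, f.IsIso → μ X Y f = 1) ∧
  (∀ (X Y Z : Struc σ), X ∈ F → Y ∈ F → Z ∈ F →
    ∀ (f : Emb X Y) (g : Emb Y Z), μ X Z (g.comp f) = μ Y Z g * μ X Y f) ∧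
  (∀ (X Y X' : Struc σ), X ∈ F → Y ∈ F → X' ∈ F →
    ∀ (i : Emb X Y) (f : Emb X X') (m : ℕ) (r : Fin m → Amalg i f),
      (∀ α, (r α).Z ∈ F) →
      (∀ A : Amalg i f, MemUpIso F A.Z → ∃ α, A.Iso (r α)) →
      (∀ α β, (r α).Iso (r β) → α = β) →
      μ X Y i = ∑ α, μ X' (r α).Z (r α).j₂)

/-- The subclass `𝔉'` of `𝔉` consisting of the structures of nonzero measure (`μ(X)`
being the value of `μ` on an embedding into `X` of an empty structure in `𝔉`). -/
def PosClass (F : Set (Struc σ)) {k : Type} [CommRing k]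
    (μ : ∀ X Y : Struc σ, Emb X Y → k) : Set (Struc σ) :=
  {X | X ∈ F ∧ ∀ W : Struc σ, W ∈ F → IsEmpty W.carrier →
    ∀ e : Emb W X, μ W X e ≠ 0}


/-! ## Auxiliary lemmas -/

theorem Emb.ext' {X Y : Struc σ} {f g : Emb X Y} (h : f.toFun = g.toFun) : f = g := by
  cases f; cases g; simpa using h

instance embFinite (X Y : Struc σ) : Finite (Emb X Y) :=
  Finite.of_injective (fun e => e.toFun) (fun _ _ h => Emb.ext' h)

theorem Emb.exists_inv {X Y : Struc σ} (f : Emb X Y) (hf : f.IsIso) :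
    ∃ g : Emb Y X, g.IsIso ∧ (∀ x, g.toFun (f.toFun x) = x) ∧ ∀ y, f.toFun (g.toFun y) = y := by
  let e := Equiv.ofBijective f.toFun ⟨f.inj, hf⟩
  have he : ∀ y, f.toFun (e.symm y) = y := fun y => e.apply_symm_apply y
  refine ⟨⟨fun y => e.symm y, fun _ _ h => e.symm.injective h, fun i v => ?_⟩,
    fun x => ⟨f.toFun x, e.symm_apply_apply x⟩, fun x => e.symm_apply_apply x, he⟩
  have := f.rel_iff i (fun j => e.symm (v j))
  simp only [he] at this
  exact this.symm

theorem strucIso_symm {X Y : Struc σ} (h : StrucIso X Y) : StrucIso Y X := by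
  obtain ⟨f, hf⟩ := h
  obtain ⟨g, hg, -, -⟩ := f.exists_inv hf
  exact ⟨g, hg⟩

theorem strucIso_trans {X Y Z : Struc σ} (h1 : StrucIso X Y) (h2 : StrucIso Y Z) :
    StrucIso X Z := by
  obtain ⟨f, hf⟩ := h1; obtain ⟨g, hg⟩ := h2
  refine ⟨g.comp f, fun z => ?_⟩
  obtain ⟨y, rfl⟩ := hg z; obtain ⟨x, rfl⟩ := hf y; exact ⟨x, rfl⟩

theorem Amalg.iso_refl {X Y₁ Y₂ : Struc σ} {i₁ : Emb X Y₁} {i₂ : Emb X Y₂}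
    (A : Amalg i₁ i₂) : A.Iso A :=
  ⟨Emb.id A.Z, fun z => ⟨z, rfl⟩, fun _ => rfl, fun _ => rfl⟩

theorem Amalg.iso_symm {X Y₁ Y₂ : Struc σ} {i₁ : Emb X Y₁} {i₂ : Emb X Y₂}
    {A B : Amalg i₁ i₂} (h : A.Iso B) : B.Iso A := by
  obtain ⟨f, hf, h1, h2⟩ := h
  obtain ⟨g, hg, hgf, _⟩ := f.exists_inv hf
  exact ⟨g, hg, fun y => by rw [← h1 y, hgf], fun y => by rw [← h2 y, hgf]⟩

theorem Amalg.iso_trans {X Y₁ Y₂ : Struc σ} {i₁ : Emb X Y₁} {i₂ : Emb X Y₂}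
    {A B C : Amalg i₁ i₂} (h : A.Iso B) (h' : B.Iso C) : A.Iso C := by
  obtain ⟨f, hf, h1, h2⟩ := h; obtain ⟨g, hg, h1', h2'⟩ := h'
  refine ⟨g.comp f, fun z => ?_, fun y => ?_, fun y => ?_⟩
  · obtain ⟨y, rfl⟩ := hg z; obtain ⟨x, rfl⟩ := hf y; exact ⟨x, rfl⟩
  · show g.toFun (f.toFun _) = _; rw [h1, h1']
  · show g.toFun (f.toFun _) = _; rw [h2, h2']

/-- The embedding from an empty structure into any structure. -/
def emptyEmb (W X : Struc σ) (hW : IsEmpty W.carrier) : Emb W X where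
  toFun := fun w => (hW.elim w)
  inj := fun w => (hW.elim w)
  rel_iff := fun i v => (hW.elim (v ⟨0, σ.arity_pos i⟩))

theorem emb_from_empty_eq {W X : Struc σ} (hW : IsEmpty W.carrier) (e e' : Emb W X) :
    e = e' :=
  Emb.ext' (funext fun w => hW.elim w)

/-- Existence of a finite complete irredundant system of representatives of isomorphism
classes of amalgamations lying (up to isomorphism) in `F`. -/
theorem exists_full_system {F : Set (Struc σ)} (hF : IsFraisse F)
    {X Y X' : Struc σ} (i : Emb X Y) (f : Emb X X') :
    ∃ (m : ℕ) (r : Fin m → Amalg i f),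
      (∀ α, (r α).Z ∈ F) ∧
      (∀ A : Amalg i f, MemUpIso F A.Z → ∃ α, A.Iso (r α)) ∧
      (∀ α β, (r α).Iso (r β) → α = β) := by
  classical
  set N := Nat.card Y.carrier + Nat.card X'.carrier with hN
  choose M R hR using hF.finClasses
  let J := {p : Σ n : Fin (N + 1), Fin (M n) // ∃ W ∈ F, StrucIso W (R p.1 p.2)}
  have hJ : ∀ j : J, ∃ W, W ∈ F ∧ StrucIso W (R j.1.1 j.1.2) := fun j => by
    obtain ⟨W, h1, h2⟩ := j.2; exact ⟨W, h1, h2⟩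
  choose w hwF hwIso using hJ
  have cover : ∀ A : Amalg i f, MemUpIso F A.Z → ∃ j : J, StrucIso A.Z (w j) := by
    intro A hA
    obtain ⟨V, hV, hZV⟩ := hA
    have hsurj : Function.Surjective (Sum.elim A.j₁.toFun A.j₂.toFun) := by
      intro z
      rcases A.surj z with ⟨y, hy⟩ | ⟨y, hy⟩
      exacts [⟨Sum.inl y, hy⟩, ⟨Sum.inr y, hy⟩]
    have hcard : Nat.card A.Z.carrier ≤ N := by
      calc Nat.card A.Z.carrier ≤ Nat.card (Y.carrier ⊕ X'.carrier) :=
            Nat.card_le_card_of_surjective _ hsurj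
        _ = N := by rw [Nat.card_sum]
    obtain ⟨g, hg⟩ := hZV
    have hcV : Nat.card V.carrier = Nat.card A.Z.carrier :=
      (Nat.card_eq_of_bijective g.toFun ⟨g.inj, hg⟩).symm
    have hle : Nat.card V.carrier < N + 1 := by omega
    obtain ⟨α, hα⟩ := hR (Nat.card V.carrier) V hV rfl
    refine ⟨⟨⟨⟨Nat.card V.carrier, hle⟩, α⟩, ⟨V, hV, hα⟩⟩, ?_⟩
    exact strucIso_trans ⟨g, hg⟩ (strucIso_trans hα (strucIso_symm (hwIso _)))
  let P : (Σ j : J, Emb Y (w j) × Emb X' (w j)) → Prop := fun t =>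
    (∀ x, t.2.1.toFun (i.toFun x) = t.2.2.toFun (f.toFun x)) ∧
    ∀ z, z ∈ Set.range t.2.1.toFun ∪ Set.range t.2.2.toFun
  let S := {t // P t}
  let mk : S → Amalg i f := fun t => ⟨w t.1.1, t.1.2.1, t.1.2.2, t.2.1, t.2.2⟩
  have hmkZ : ∀ t : S, (mk t).Z ∈ F := fun t => hwF t.1.1
  have cover2 : ∀ A : Amalg i f, MemUpIso F A.Z → ∃ t : S, A.Iso (mk t) := by
    intro A hA
    obtain ⟨j, g, hg⟩ := cover A hA
    refine ⟨⟨⟨j, g.comp A.j₁, g.comp A.j₂⟩, ⟨fun x => congrArg g.toFun (A.comm x), fun z => ?_⟩⟩,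
      g, hg, fun y => rfl, fun y => rfl⟩
    obtain ⟨z', rfl⟩ := hg z
    rcases A.surj z' with ⟨y, hy⟩ | ⟨y, hy⟩
    · exact Or.inl ⟨y, by simp [Emb.comp, hy]⟩
    · exact Or.inr ⟨y, by simp [Emb.comp, hy]⟩
  have hfinS : Finite S := by infer_instance
  let sd : Setoid S := ⟨fun s t => (mk s).Iso (mk t),
    ⟨fun s => Amalg.iso_refl _, Amalg.iso_symm, Amalg.iso_trans⟩⟩
  have hfinQ : Finite (Quotient sd) := Quotient.finite _
  letI : Fintype (Quotient sd) := Fintype.ofFinite _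
  let e : Fin (Fintype.card (Quotient sd)) ≃ Quotient sd := (Fintype.equivFin _).symm
  refine ⟨Fintype.card (Quotient sd), fun β => mk (e β).out, fun β => hmkZ _, ?_, ?_⟩
  · intro A hA
    obtain ⟨t, ht⟩ := cover2 A hA
    refine ⟨e.symm (Quotient.mk sd t), Amalg.iso_trans ht (Amalg.iso_symm ?_)⟩
    have h1 : Quotient.mk sd (e (e.symm (Quotient.mk sd t))).out = Quotient.mk sd t := by
      rw [Quotient.out_eq, e.apply_symm_apply]
    exact Quotient.exact h1
  · intro α β h
    have : Quotient.mk sd (e α).out = Quotient.mk sd (e β).out := Quotient.sound h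
    rw [Quotient.out_eq, Quotient.out_eq] at this
    exact e.injective this

/-- **Proposition 2.16**: let `𝔉` be a Fraïssé class, `k` an integral domain, `μ` a
measure for `𝔉` valued in `k`, and `𝔉'` the subclass of structures with nonzero measure.
Then (1) `𝔉'` is a Fraïssé class; (2) `μ` restricts to a measure for `𝔉'` all of whose
values (on embeddings between members of `𝔉'`) are nonzero; and (3) if `k` is a field,
all these values are units, i.e. the restricted measure is regular. -/
theorem induced_regular_measure {F : Set (Struc σ)} (hF : IsFraisse F)
    {k : Type} [CommRing k] [IsDomain k]
    (μ : ∀ X Y : Struc σ, Emb X Y → k) (hμ : IsMeasure F μ) :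
    IsFraisse (PosClass F μ) ∧
    IsMeasure (PosClass F μ) μ ∧
    (∀ X Y : Struc σ, X ∈ PosClass F μ → Y ∈ PosClass F μ →
      ∀ f : Emb X Y, μ X Y f ≠ 0) ∧
    (IsField k → ∀ X Y : Struc σ, X ∈ PosClass F μ → Y ∈ PosClass F μ →
      ∀ f : Emb X Y, IsUnit (μ X Y f)) := by
  classical
  obtain ⟨hiso, hcomp, hamal⟩ := hμ
  -- an empty structure in `F`
  obtain ⟨X₀, hX₀⟩ := hF.nonempty
  obtain ⟨W₀, hW₀F, hW₀iso⟩ :=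
    hF.hereditary X₀ hX₀ (X₀.restrict ∅) ⟨X₀.subEmb ∅⟩
  have hW₀e : IsEmpty W₀.carrier := by
    obtain ⟨g, hg⟩ := hW₀iso
    refine ⟨fun x => ?_⟩
    obtain ⟨y, -⟩ := hg x
    exact y.2
  -- the measure of a structure
  set ν : Struc σ → k := fun Z => μ W₀ Z (emptyEmb W₀ Z hW₀e) with hνdef
  have hν : ∀ (V Z : Struc σ), V ∈ F → Z ∈ F → IsEmpty V.carrier →
      ∀ e : Emb V Z, μ V Z e = ν Z := by
    intro V Z hVF hZF hV e
    have hι : (emptyEmb W₀ V hW₀e).IsIso := fun v => hV.elim v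
    have h1 : e.comp (emptyEmb W₀ V hW₀e) = emptyEmb W₀ Z hW₀e :=
      emb_from_empty_eq hW₀e _ _
    have := hcomp W₀ V Z hW₀F hVF hZF (emptyEmb W₀ V hW₀e) e
    rw [h1, hiso W₀ V hW₀F hVF _ hι, mul_one] at this
    exact this.symm
  have hmem : ∀ Z : Struc σ, Z ∈ PosClass F μ ↔ Z ∈ F ∧ ν Z ≠ 0 := by
    intro Z
    constructor
    · rintro ⟨h1, h2⟩; exact ⟨h1, h2 W₀ hW₀F hW₀e _⟩
    · rintro ⟨h1, h2⟩
      exact ⟨h1, fun V hVF hVe e => by rw [hν V Z hVF h1 hVe e]; exact h2⟩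
  -- multiplicativity of ν
  have hmul : ∀ (X Y : Struc σ), X ∈ F → Y ∈ F → ∀ g : Emb X Y,
      ν Y = μ X Y g * ν X := by
    intro X Y hX hY g
    have h1 : g.comp (emptyEmb W₀ X hW₀e) = emptyEmb W₀ Y hW₀e :=
      emb_from_empty_eq hW₀e _ _
    have := hcomp W₀ X Y hW₀F hX hY (emptyEmb W₀ X hW₀e) g
    rw [h1] at this
    exact this
  -- nonvanishing of the restricted measure
  have hnz : ∀ X Y : Struc σ, X ∈ PosClass F μ → Y ∈ PosClass F μ →
      ∀ g : Emb X Y, μ X Y g ≠ 0 := by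
    intro X Y hX hY g h0
    obtain ⟨hXF, hXν⟩ := (hmem X).mp hX
    obtain ⟨hYF, hYν⟩ := (hmem Y).mp hY
    apply hYν
    rw [hmul X Y hXF hYF g, h0, zero_mul]
  -- ν is invariant under isomorphism
  have hνiso : ∀ Z Z' : Struc σ, Z ∈ F → Z' ∈ F → StrucIso Z Z' → ν Z' = ν Z := by
    intro Z Z' hZ hZ' ⟨g, hg⟩
    rw [hmul Z Z' hZ hZ' g, hiso Z Z' hZ hZ' g hg, one_mul]
  -- μ is invariant under isomorphism of amalgamations
  have hμiso : ∀ (X' Z Z' : Struc σ), X' ∈ F → Z ∈ F → Z' ∈ F →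
      ∀ (j : Emb X' Z) (j' : Emb X' Z') (g : Emb Z Z'), g.IsIso →
      (∀ y, g.toFun (j.toFun y) = j'.toFun y) → μ X' Z j = μ X' Z' j' := by
    intro X' Z Z' hX' hZ hZ' j j' g hg hcm
    have h1 : g.comp j = j' := Emb.ext' (funext hcm)
    rw [← h1, hcomp X' Z Z' hX' hZ hZ' j g, hiso Z Z' hZ hZ' g hg, one_mul]
  have hW₀pos : W₀ ∈ PosClass F μ := by
    rw [hmem]
    refine ⟨hW₀F, ?_⟩
    have : (emptyEmb W₀ W₀ hW₀e).IsIso := fun y => hW₀e.elim y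
    rw [hνdef]
    simp only
    rw [hiso W₀ W₀ hW₀F hW₀F _ this]
    exact one_ne_zero
  -- Fraïssé: amalgamation in the subclass
  have hamal' : ∀ (X Y₁ Y₂ : Struc σ), X ∈ PosClass F μ → Y₁ ∈ PosClass F μ →
      Y₂ ∈ PosClass F μ → ∀ (i₁ : Emb X Y₁) (i₂ : Emb X Y₂),
      ∃ A : Amalg i₁ i₂, MemUpIso (PosClass F μ) A.Z := by
    intro X Y₁ Y₂ hX hY₁ hY₂ i₁ i₂
    obtain ⟨m, s, hsZ, hscover, hsirr⟩ := exists_full_system hF i₁ i₂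
    have hsum := hamal X Y₁ Y₂ ((hmem X).mp hX).1 ((hmem Y₁).mp hY₁).1
      ((hmem Y₂).mp hY₂).1 i₁ i₂ m s hsZ hscover hsirr
    have hne : μ X Y₁ i₁ ≠ 0 := hnz X Y₁ hX hY₁ i₁
    rw [hsum] at hne
    obtain ⟨β, -, hβ⟩ := Finset.exists_ne_zero_of_sum_ne_zero hne
    refine ⟨s β, memUpIso_of_mem ?_⟩
    rw [hmem]
    refine ⟨hsZ β, ?_⟩
    rw [hmul Y₂ (s β).Z ((hmem Y₂).mp hY₂).1 (hsZ β) (s β).j₂]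
    exact mul_ne_zero hβ ((hmem Y₂).mp hY₂).2
  refine ⟨⟨⟨W₀, hW₀pos⟩, ?_, ?_, hamal'⟩, ⟨?_, ?_, ?_⟩, hnz, ?_⟩
  · -- finClasses
    intro n
    obtain ⟨m, r, h⟩ := hF.finClasses n
    exact ⟨m, r, fun Z hZ => h Z ((hmem Z).mp hZ).1⟩
  · -- hereditary
    intro X hX Y ⟨e⟩
    obtain ⟨W, hWF, hYW⟩ := hF.hereditary X ((hmem X).mp hX).1 Y ⟨e⟩
    obtain ⟨g, hg⟩ := strucIso_symm hYW
    refine ⟨W, ?_, hYW⟩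
    rw [hmem]
    refine ⟨hWF, fun h0 => ?_⟩
    have := hmul W X hWF ((hmem X).mp hX).1 (e.comp g)
    rw [h0, mul_zero] at this
    exact ((hmem X).mp hX).2 this
  · -- measure axiom (a)
    exact fun X Y hX hY => hiso X Y ((hmem X).mp hX).1 ((hmem Y).mp hY).1
  · -- measure axiom (b)
    exact fun X Y Z hX hY hZ => hcomp X Y Z ((hmem X).mp hX).1 ((hmem Y).mp hY).1
      ((hmem Z).mp hZ).1
  · -- measure axiom (c)
    intro X Y X' hX hY hX' i f m r hrZ hrcover hrirr
    obtain ⟨hXF, hXν⟩ := (hmem X).mp hX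
    obtain ⟨hYF, hYν⟩ := (hmem Y).mp hY
    obtain ⟨hX'F, hX'ν⟩ := (hmem X').mp hX'
    obtain ⟨M, s, hsZ, hscover, hsirr⟩ := exists_full_system hF i f
    have hsum := hamal X Y X' hXF hYF hX'F i f M s hsZ hscover hsirr
    -- the "good" indices: amalgamations of nonzero measure
    set good : Finset (Fin M) := Finset.univ.filter (fun β => ν (s β).Z ≠ 0) with hgood
    have hbad : ∀ β ∈ Finset.univ, β ∉ good → μ X' (s β).Z (s β).j₂ = 0 := by
      intro β _ hβ
      rw [hgood, Finset.mem_filter] at hβ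
      push_neg at hβ
      have h0 : ν (s β).Z = 0 := hβ (Finset.mem_univ β)
      have := hmul X' (s β).Z hX'F (hsZ β) (s β).j₂
      rw [h0] at this
      rcases mul_eq_zero.mp this.symm with h | h
      · exact h
      · exact absurd h hX'ν
    have h1 : μ X Y i = ∑ β ∈ good, μ X' (s β).Z (s β).j₂ := by
      rw [hsum]
      exact (Finset.sum_subset (Finset.subset_univ good) hbad).symm
    rw [h1]
    -- map each given representative to the corresponding full-system representative
    have hφ : ∀ α : Fin m, ∃ β, ((r α).Iso (s β)) :=
      fun α => hscover (r α) (memUpIso_of_mem ((hmem (r α).Z).mp (hrZ α)).1)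
    choose φ hφ using hφ
    -- the sums agree via the bijection φ
    refine (Finset.sum_bij (fun α _ => φ α) ?_ ?_ ?_ ?_).symm
    · -- maps into good
      intro α _
      rw [hgood, Finset.mem_filter]
      refine ⟨Finset.mem_univ _, ?_⟩
      obtain ⟨g, hg, -, -⟩ := hφ α
      rw [hνiso (r α).Z (s (φ α)).Z ((hmem (r α).Z).mp (hrZ α)).1 (hsZ (φ α)) ⟨g, hg⟩]
      exact ((hmem (r α).Z).mp (hrZ α)).2
    · -- injective
      intro α _ α' _ h
      have h' : φ α = φ α' := h
      exact hrirr α α' (Amalg.iso_trans (hφ α) (by rw [h']; exact Amalg.iso_symm (hφ α')))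
    · -- surjective
      intro β hβ
      rw [hgood, Finset.mem_filter] at hβ
      have hsβ : (s β).Z ∈ PosClass F μ := (hmem _).mpr ⟨hsZ β, hβ.2⟩
      obtain ⟨α, hα⟩ := hrcover (s β) (memUpIso_of_mem hsβ)
      refine ⟨α, Finset.mem_univ _, ?_⟩
      exact hsirr _ _ (Amalg.iso_trans (Amalg.iso_symm (hφ α)) (Amalg.iso_symm hα))
    · -- values agree
      intro α _
      obtain ⟨g, hg, -, h2⟩ := hφ α
      exact hμiso X' (r α).Z (s (φ α)).Z hX'F ((hmem (r α).Z).mp (hrZ α)).1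
        (hsZ (φ α)) (r α).j₂ (s (φ α)).j₂ g hg h2
  · -- regularity when k is a field
    intro hf X Y hX hY g
    obtain ⟨b, hb⟩ := hf.mul_inv_cancel (hnz X Y hX hY g)
    exact IsUnit.of_mul_eq_one _ hb


end Paper
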